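/- arXiv:math/9806089 — 7 statements merged into one kernel-verified Lean document; each statement's English description precedes it below -/
import Mathlib

section
/- Let U ⊆ ℂ be an open set stable under complex conjugation, and let f be holomorphic on U and satisfy f(conj z) = conj(f(z)) for every z ∈ U. Then for every real number c and every r > 0 such that the circle {z : |z − c| = r} is contained in U, the circle integral ∮_{|z−c|=r} f(z) dz has zero real part. -/
open intervalIntegral Complex

private lemma conj_intervalIntegral (g : ℝ → ℂ) (a b : ℝ) :
    (starRingEnd ℂ) (∫ x in a..b, g x) = ∫ x in a..b, (starRingEnd ℂ) (g x) := by
  simp only [intervalIntegral, map_sub, ← integral_conj]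

/-- If `U ⊆ ℂ` is open and stable under complex conjugation, and `f` is
holomorphic on `U` and satisfies `f (conj z) = conj (f z)` on `U`, then for every real
center `c` and radius `r > 0` with the circle `{z : |z − c| = r}` contained in `U`, the
circle integral `∮_{|z−c|=r} f(z) dz` has zero real part. -/
theorem circleIntegral_re_eq_zero_of_conj_symm (U : Set ℂ) (hU : IsOpen U)
    (hUconj : ∀ z ∈ U, (starRingEnd ℂ) z ∈ U)
    (f : ℂ → ℂ) (hf : DifferentiableOn ℂ f U)
    (hsym : ∀ z ∈ U, f ((starRingEnd ℂ) z) = (starRingEnd ℂ) (f z))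
    (c : ℝ) (r : ℝ) (hr : 0 < r)
    (hsub : Metric.sphere (c : ℂ) r ⊆ U) :
    (circleIntegral f (c : ℂ) r).re = 0 := by
  set g : ℝ → ℂ := fun θ => deriv (circleMap (c : ℂ) r) θ • f (circleMap (c : ℂ) r θ) with hg
  have hmem : ∀ θ : ℝ, circleMap (c : ℂ) r θ ∈ U := fun θ =>
    hsub (circleMap_mem_sphere (c : ℂ) hr.le θ)
  -- conj of circleMap
  have h3 : ∀ t : ℝ, (starRingEnd ℂ) (circleMap 0 r t) = circleMap 0 r (-t) := by
    intro t
    simp only [circleMap, zero_add, map_mul, Complex.conj_ofReal, ← Complex.exp_conj,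
      Complex.conj_I, Complex.ofReal_neg, mul_neg, neg_mul]
  have hconjmap : ∀ θ : ℝ, (starRingEnd ℂ) (circleMap (c : ℂ) r θ) = circleMap (c : ℂ) r (-θ) := by
    intro θ
    have : circleMap (c : ℂ) r θ = (c : ℂ) + circleMap 0 r θ := by simp [circleMap]
    rw [this, map_add, Complex.conj_ofReal, h3]
    simp [circleMap]
  -- conj of integrand
  have hkey : ∀ θ : ℝ, (starRingEnd ℂ) (g θ) = -(g (-θ)) := by
    intro θ
    simp only [hg, smul_eq_mul, deriv_circleMap, map_mul, ← hsym _ (hmem θ), hconjmap θ,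
      h3, Complex.conj_I]
    ring
  -- periodicity of g
  have hper : Function.Periodic g (2 * Real.pi) := by
    intro θ
    simp only [hg, deriv_circleMap, smul_eq_mul, (periodic_circleMap (0 : ℂ) r) θ,
      (periodic_circleMap ((c : ℂ)) r) θ]
  have hI : circleIntegral f (c : ℂ) r = ∫ θ in (0:ℝ)..(2 * Real.pi), g θ := rfl
  have hconjI : (starRingEnd ℂ) (circleIntegral f (c : ℂ) r) = -circleIntegral f (c : ℂ) r := by
    rw [hI, conj_intervalIntegral]
    have : (∫ θ in (0:ℝ)..(2 * Real.pi), (starRingEnd ℂ) (g θ))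
        = ∫ θ in (0:ℝ)..(2 * Real.pi), -(g (-θ)) := by
      refine intervalIntegral.integral_congr fun θ _ => hkey θ
    rw [this, intervalIntegral.integral_neg]
    congr 1
    have h4 : (∫ θ in (0:ℝ)..(2 * Real.pi), g (-θ)) = ∫ θ in (-(2 * Real.pi))..(0:ℝ), g θ := by
      simpa using intervalIntegral.integral_comp_neg g (a := 0) (b := 2 * Real.pi)
    rw [h4]
    have := hper.intervalIntegral_add_eq (-(2 * Real.pi)) 0
    simpa using this
  have := congrArg Complex.re hconjI
  simp only [Complex.conj_re, Complex.neg_re] at this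
  linarith
end

section
/- Let t_1, …, t_n be distinct real numbers, let m_1, …, m_n be integers, and define f(z) = ∏_{k=1}^n (z − t_k)^{m_k} (integer powers, zpow) for z ∈ ℂ \ {t_1, …, t_n}. Then for every real number c and every r > 0 such that no t_k lies on the circle {z : |z − c| = r}, the circle integral ∮_{|z−c|=r} f(z) dz has zero real part; in particular every period of the 1-form f(z) dz around the points t_k is purely imaginary. -/
open intervalIntegral Real Complex

/-- Lemma 3.3.4 of the paper. Let `t 1, …, t n` be distinct real
numbers, `m 1, …, m n` integers, and `f z = ∏ k, (z − t k) ^ m k` (integer `zpow`) on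
`ℂ \ {t 1, …, t n}`. Then for every real center `c` and radius `r > 0` such that no `t k`
lies on the circle `{z : |z − c| = r}`, the circle integral of `f` over that circle has
zero real part: every period of the 1-form `f(z) dz` is purely imaginary. -/
theorem circleIntegral_re_eq_zero_of_real_poles (n : ℕ) (t : Fin n → ℝ)
    (ht : Function.Injective t) (m : Fin n → ℤ) (f : ℂ → ℂ)
    (hf : ∀ z : ℂ, (∀ k : Fin n, z ≠ (t k : ℂ)) →
      f z = ∏ k : Fin n, (z - (t k : ℂ)) ^ (m k))
    (c : ℝ) (r : ℝ) (hr : 0 < r)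
    (hcirc : ∀ k : Fin n, ‖(t k : ℂ) - (c : ℂ)‖ ≠ r) :
    (circleIntegral f (c : ℂ) r).re = 0 := by
  -- points on the circle avoid the poles
  have hne : ∀ θ : ℝ, ∀ k : Fin n, circleMap c r θ ≠ (t k : ℂ) := by
    intro θ k h
    apply hcirc k
    rw [← h]
    simpa [abs_of_pos hr] using congrArg norm (circleMap_sub_center (c : ℂ) r θ)
  -- the integrand
  set g : ℝ → ℂ := fun θ => deriv (circleMap c r) θ • f (circleMap c r θ) with hg
  have hfval : ∀ θ : ℝ, f (circleMap c r θ) =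
      ∏ k : Fin n, (circleMap c r θ - (t k : ℂ)) ^ (m k) := fun θ => hf _ (hne θ)
  -- continuity of g
  have hgc : Continuous g := by
    simp only [hg, deriv_circleMap]
    apply ((continuous_circleMap 0 r).mul continuous_const).smul
    have : (fun θ => f (circleMap c r θ)) =
        fun θ => ∏ k : Fin n, (circleMap c r θ - (t k : ℂ)) ^ (m k) := funext hfval
    rw [this]
    refine continuous_finset_prod _ (fun k _ => ?_)
    refine ((continuous_circleMap c r).sub continuous_const).zpow₀ _ (fun θ => Or.inl ?_)
    exact sub_ne_zero.mpr (hne θ k)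
  have hgi : ∀ a b : ℝ, IntervalIntegrable g MeasureTheory.volume a b :=
    fun a b => hgc.intervalIntegrable a b
  -- conjugation symmetry: circleMap at -θ is the conjugate
  have hconjMap : ∀ θ : ℝ, circleMap c r (-θ) = (starRingEnd ℂ) (circleMap c r θ) := by
    intro θ
    simp only [circleMap, map_add, map_mul, Complex.conj_ofReal]
    congr 1
    rw [← Complex.exp_conj]
    congr 1
    simp [Complex.conj_ofReal]
  have hconjf : ∀ θ : ℝ, f (circleMap c r (-θ)) = (starRingEnd ℂ) (f (circleMap c r θ)) := by
    intro θ
    rw [hfval, hfval, map_prod]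
    refine Finset.prod_congr rfl (fun k _ => ?_)
    rw [map_zpow₀, map_sub, ← hconjMap, Complex.conj_ofReal]
  have hconjMap0 : ∀ θ : ℝ, circleMap 0 r (-θ) = (starRingEnd ℂ) (circleMap 0 r θ) := by
    intro θ
    simp only [circleMap, map_add, map_mul, map_zero, Complex.conj_ofReal]
    congr 1
    rw [← Complex.exp_conj]
    congr 1
    simp [Complex.conj_ofReal]
  have hkey : ∀ θ : ℝ, g (-θ) = -(starRingEnd ℂ) (g θ) := by
    intro θ
    simp only [hg, deriv_circleMap, smul_eq_mul, map_mul, hconjf]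
    rw [hconjMap0, Complex.conj_I]
    ring
  have hodd : ∀ θ : ℝ, (g (-θ)).re = -(g θ).re := by
    intro θ
    rw [hkey θ]
    simp
  -- real part of the circle integral
  have hre : (circleIntegral f (c : ℂ) r).re = ∫ θ in (0 : ℝ)..2 * π, (g θ).re := by
    rw [circleIntegral]
    exact (ContinuousLinearMap.intervalIntegral_comp_comm Complex.reCLM
      (hgi 0 (2 * π))).symm
  rw [hre]
  -- shift the integration interval to [-π, π]
  have hper : Function.Periodic (fun θ => (g θ).re) (2 * π) := by
    intro θ
    have := (periodic_circleMap c r) θ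
    simp only [hg, deriv_circleMap]
    rw [(periodic_circleMap (c : ℂ) r) θ, (periodic_circleMap 0 r) θ]
  have hshift : (∫ θ in (0 : ℝ)..2 * π, (g θ).re) = ∫ θ in (-π)..π, (g θ).re := by
    have := hper.intervalIntegral_add_eq 0 (-π)
    simp only [zero_add] at this
    rw [this]
    norm_num
    ring_nf
  rw [hshift]
  -- integral of an odd function over a symmetric interval vanishes
  have h1 : (∫ θ in (-π)..π, (g (-θ)).re) = ∫ θ in (-π)..π, (g θ).re := by
    simpa using intervalIntegral.integral_comp_neg (a := -π) (b := π)
      (fun θ => (g θ).re)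
  have h2 : (∫ θ in (-π)..π, (g (-θ)).re) = -∫ θ in (-π)..π, (g θ).re := by
    simp_rw [hodd]
    exact intervalIntegral.integral_neg
  linarith [h1.symm.trans h2]
end

section
/- For each index j with 1 ≤ j ≤ n−1 and each real t with t_j < t < t_{j+1}, there is a real number ρ > 0 such that f(t) = ρ · I^(a_{j+1} + a_{j+2} + ⋯ + a_n); moreover, for every real t > t_n, f(t) is a positive real number. In particular, on each open interval between consecutive vertices the Schwarz–Christoffel integrand has constant direction, a power of the imaginary unit I. -/
lemma sc_aux (y : ℝ) (hy : y ≠ 0) (a : ℤ) :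
    ∃ ρ : ℝ, 0 < ρ ∧ ((y:ℂ)) ^ ((a:ℂ)/2) = (ρ:ℂ) * Complex.I ^ (if y < 0 then a else 0) := by
  rcases hy.lt_or_gt with h | h
  · refine ⟨Real.exp (Real.log |y| * (a / 2)), Real.exp_pos _, ?_⟩
    rw [if_pos h]
    have hy0 : (y:ℂ) ≠ 0 := by exact_mod_cast hy
    have hlog : Complex.log (y:ℂ) = (Real.log |y| : ℂ) + (Real.pi : ℂ) * Complex.I := by
      rw [Complex.log, Complex.arg_ofReal_of_neg h, Complex.norm_real, Real.norm_eq_abs]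
    have hIpow : Complex.exp ((Real.pi : ℂ) * Complex.I * ((a:ℂ)/2)) = Complex.I ^ a := by
      have : (Real.pi : ℂ) * Complex.I * ((a:ℂ)/2) = (a:ℂ) * ((Real.pi : ℂ)/2 * Complex.I) := by
        ring
      rw [this, Complex.exp_int_mul, Complex.exp_mul_I, Complex.cos_pi_div_two,
        Complex.sin_pi_div_two, one_mul, zero_add]
    rw [Complex.cpow_def_of_ne_zero hy0, hlog, add_mul, Complex.exp_add, hIpow]
    rw [Complex.ofReal_exp]
    congr 2
    push_cast
    ring
  · refine ⟨y ^ ((a:ℝ)/2), Real.rpow_pos_of_pos h _, ?_⟩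
    have he : ((a:ℂ)/2) = (((a:ℝ)/2 : ℝ) : ℂ) := by push_cast; ring
    rw [if_neg (not_lt.2 h.le), zpow_zero, mul_one, he, ← Complex.ofReal_cpow h.le]

lemma sc_zpow_sum (s : Finset ℕ) (e : ℕ → ℤ) :
    ∏ k ∈ s, Complex.I ^ e k = Complex.I ^ (∑ k ∈ s, e k) := by
  classical
  induction s using Finset.induction with
  | empty => simp
  | insert _ _ h ih =>
      rw [Finset.prod_insert h, Finset.sum_insert h, ih, zpow_add₀ Complex.I_ne_zero]

lemma sc_prod (n : ℕ) (t : ℕ → ℝ) (a : ℕ → ℤ) (x : ℝ) (hne : ∀ k < n, x ≠ t k) :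
    ∃ ρ : ℝ, 0 < ρ ∧ ∏ k ∈ Finset.range n, ((x:ℂ) - (t k : ℂ)) ^ ((a k : ℂ)/2)
      = (ρ:ℂ) * Complex.I ^ (∑ k ∈ Finset.range n, if x < t k then a k else 0) := by
  have key : ∀ k : ℕ, ∃ ρ : ℝ, 0 < ρ ∧ (k < n →
      ((x:ℂ) - (t k : ℂ)) ^ ((a k : ℂ)/2)
        = (ρ:ℂ) * Complex.I ^ (if x < t k then a k else 0)) := by
    intro k
    by_cases hk : k < n
    · obtain ⟨ρ, hρ, heq⟩ := sc_aux (x - t k) (sub_ne_zero.2 (hne k hk)) (a k)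
      refine ⟨ρ, hρ, fun _ => ?_⟩
      rw [show ((x:ℂ) - (t k : ℂ)) = ((x - t k : ℝ):ℂ) by push_cast; ring, heq]
      congr 2
      simp [sub_neg]
    · exact ⟨1, one_pos, fun h => absurd h hk⟩
  choose ρ hρpos hρ using key
  refine ⟨∏ k ∈ Finset.range n, ρ k, Finset.prod_pos (fun k _ => hρpos k), ?_⟩
  rw [Finset.prod_congr rfl (fun k hk => hρ k (Finset.mem_range.1 hk)),
    Finset.prod_mul_distrib, Complex.ofReal_prod, sc_zpow_sum]

/-- On each open interval between consecutive vertices the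
Schwarz–Christoffel integrand `f z = ∏_{k<n} (z − t k) ^ (a k / 2)` has constant
direction, a power of `I`: for each pair of consecutive vertices `t j < t (j+1)` and each
real `x` between them, `f x = ρ • I ^ (a (j+1) + ⋯ + a (n-1))` for some real `ρ > 0`
(the exponent being the integer sum of the vertex data beyond `t j`); and `f x` is a
positive real number for every real `x` beyond the last vertex `t (n-1)`.
(Vertices are indexed `0, …, n-1` here, corresponding to `t_1, …, t_n` in the paper.) -/
theorem schwarzChristoffel_integrand_constant_direction (n : ℕ) (hn : 1 ≤ n)
    (t : ℕ → ℝ) (hmono : ∀ i j : ℕ, i < j → j < n → t i < t j)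
    (a : ℕ → ℤ) (hodd : ∀ k < n, Odd (a k))
    (f : ℂ → ℂ)
    (hf : ∀ z : ℂ, f z = ∏ k ∈ Finset.range n, (z - (t k : ℂ)) ^ ((a k : ℂ) / 2)) :
    (∀ j : ℕ, j + 1 < n → ∀ x : ℝ, t j < x → x < t (j + 1) →
      ∃ ρ : ℝ, 0 < ρ ∧
        f (x : ℂ) = (ρ : ℂ) * Complex.I ^ (∑ k ∈ Finset.Ico (j + 1) n, a k)) ∧
    (∀ x : ℝ, t (n - 1) < x → ∃ ρ : ℝ, 0 < ρ ∧ f (x : ℂ) = (ρ : ℂ)) := by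
  constructor
  · intro j hj x hx1 hx2
    have hlt : ∀ k, k ≤ j → t k < x := by
      intro k hk
      rcases hk.lt_or_eq with h | h
      · exact lt_trans (hmono k j h (lt_trans (Nat.lt_succ_self j) hj)) hx1
      · rw [h]; exact hx1
    have hgt : ∀ k, j + 1 ≤ k → k < n → x < t k := by
      intro k hk hkn
      rcases hk.lt_or_eq with h | h
      · exact lt_trans hx2 (hmono (j+1) k h hkn)
      · rw [← h]; exact hx2
    obtain ⟨ρ, hρ, heq⟩ := sc_prod n t a x (by
      intro k hk
      rcases le_or_gt k j with h | h
      · exact (hlt k h).ne'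
      · exact (hgt k h hk).ne)
    refine ⟨ρ, hρ, ?_⟩
    rw [hf, heq]
    congr 1
    rw [Finset.range_eq_Ico,
      ← Finset.sum_Ico_consecutive _ (Nat.zero_le (j+1)) hj.le,
      Finset.sum_eq_zero (fun k hk => if_neg (not_lt.2
        (hlt k (Nat.lt_succ_iff.1 (Finset.mem_Ico.1 hk).2)).le)),
      Finset.sum_congr rfl (fun k hk => if_pos
        (hgt k (Finset.mem_Ico.1 hk).1 (Finset.mem_Ico.1 hk).2)), zero_add]
  · intro x hx
    have hlt : ∀ k, k < n → t k < x := by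
      intro k hk
      have hk' : k ≤ n - 1 := Nat.le_pred_of_lt hk
      rcases hk'.lt_or_eq with h | h
      · exact lt_trans (hmono k (n-1) h (Nat.sub_lt hn one_pos)) hx
      · rw [h]; exact hx
    obtain ⟨ρ, hρ, heq⟩ := sc_prod n t a x (fun k hk => (hlt k hk).ne')
    refine ⟨ρ, hρ, ?_⟩
    rw [hf, heq, Finset.sum_eq_zero (fun k hk => if_neg (not_lt.2
      (hlt k (Finset.mem_range.1 hk)).le)), zpow_zero, mul_one]
end

section
/- Let 1 ≤ j ≤ n−2, let x₀ < x₁ be real numbers in the open interval (t_j, t_{j+1}), and let y₀ < y₁ be real numbers in the open interval (t_{j+1}, t_{j+2}). Set P = ∫_{x₀}^{x₁} f(t) dt and Q = ∫_{y₀}^{y₁} f(t) dt (interval integrals of the restriction of f to the real line). Then P ≠ 0, Q ≠ 0, and Re(P · conj(Q)) = 0; that is, the two boundary edges of the Schwarz–Christoffel image adjacent to the vertex t_{j+1} are nondegenerate mutually orthogonal segments. -/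
open Complex Finset Set intervalIntegral

private lemma sc_pointwise (n : ℕ) (t : ℕ → ℝ) (a : ℕ → ℤ) (m : ℕ) (hm : m ≤ n)
    (x : ℝ) (hlt : ∀ k, k < m → t k < x) (hgt : ∀ k, m ≤ k → k < n → x < t k) :
    (∏ k ∈ Finset.range n, ((x : ℂ) - (t k : ℂ)) ^ ((a k : ℂ) / 2)) =
      ((∏ k ∈ Finset.range n, |x - t k| ^ ((a k : ℝ) / 2) : ℝ) : ℂ) *
        Complex.exp (Real.pi * Complex.I / 2 * (∑ k ∈ Finset.Ico m n, (a k : ℂ))) := by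
  have hsplitL := Finset.prod_range_mul_prod_Ico
    (fun k => ((x : ℂ) - (t k : ℂ)) ^ ((a k : ℂ) / 2)) hm
  have hsplitR := Finset.prod_range_mul_prod_Ico
    (fun k => |x - t k| ^ ((a k : ℝ) / 2)) hm
  rw [← hsplitL, ← hsplitR]
  have h1 : ∀ k ∈ Finset.range m,
      ((x : ℂ) - (t k : ℂ)) ^ ((a k : ℂ) / 2) = ((|x - t k| ^ ((a k : ℝ) / 2) : ℝ) : ℂ) := by
    intro k hk
    have hpos : 0 < x - t k := sub_pos.2 (hlt k (Finset.mem_range.1 hk))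
    have habs : |x - t k| = x - t k := abs_of_pos hpos
    have : ((x : ℂ) - (t k : ℂ)) = ((x - t k : ℝ) : ℂ) := by push_cast; ring
    rw [this, habs, Complex.ofReal_cpow hpos.le]
    push_cast
    ring_nf
  have h2 : ∀ k ∈ Finset.Ico m n,
      ((x : ℂ) - (t k : ℂ)) ^ ((a k : ℂ) / 2) =
        ((|x - t k| ^ ((a k : ℝ) / 2) : ℝ) : ℂ) *
          Complex.exp (Real.pi * Complex.I * ((a k : ℂ) / 2)) := by
    intro k hk
    obtain ⟨hk1, hk2⟩ := Finset.mem_Ico.1 hk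
    have hneg : x - t k < 0 := sub_neg.2 (hgt k hk1 hk2)
    have habs : |x - t k| = -(x - t k) := abs_of_neg hneg
    have hb : ((x : ℂ) - (t k : ℂ)) = ((x - t k : ℝ) : ℂ) := by push_cast; ring
    rw [hb, Complex.ofReal_cpow_of_nonpos hneg.le, habs]
    have : ((-(x - t k) : ℝ) : ℂ) = -((x - t k : ℝ) : ℂ) := by push_cast; ring
    rw [Complex.ofReal_cpow (by linarith : (0:ℝ) ≤ -(x - t k)), this]
    push_cast
    ring_nf
  rw [Finset.prod_congr rfl h1, Finset.prod_congr rfl h2, Finset.prod_mul_distrib,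
    ← Complex.exp_sum]
  push_cast [Complex.ofReal_prod]
  have : (∑ k ∈ Finset.Ico m n, (Real.pi : ℂ) * Complex.I * ((a k : ℂ) / 2)) =
      (Real.pi : ℂ) * Complex.I / 2 * (∑ k ∈ Finset.Ico m n, (a k : ℂ)) := by
    rw [Finset.mul_sum]
    exact Finset.sum_congr rfl fun k _ => by ring
  rw [this]
  ring

private lemma sc_edge (n : ℕ) (t : ℕ → ℝ) (a : ℕ → ℤ) (m : ℕ) (hm : m ≤ n)
    (x₀ x₁ : ℝ) (hx : x₀ < x₁)
    (hlt : ∀ k, k < m → t k < x₀) (hgt : ∀ k, m ≤ k → k < n → x₁ < t k) :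
    ∃ r : ℝ, 0 < r ∧
      (∫ x in x₀..x₁, ∏ k ∈ Finset.range n, ((x : ℂ) - (t k : ℂ)) ^ ((a k : ℂ) / 2)) =
        (r : ℂ) * Complex.exp (Real.pi * Complex.I / 2 * (∑ k ∈ Finset.Ico m n, (a k : ℂ))) := by
  set g : ℝ → ℝ := fun x => ∏ k ∈ Finset.range n, |x - t k| ^ ((a k : ℝ) / 2) with hg
  have huIcc : Set.uIcc x₀ x₁ = Set.Icc x₀ x₁ := Set.uIcc_of_le hx.le
  have hne : ∀ x ∈ Set.Icc x₀ x₁, ∀ k < n, x - t k ≠ 0 := by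
    intro x hx' k hk
    rcases lt_or_ge k m with h | h
    · have := hlt k h; have := hx'.1; intro hc; nlinarith [sub_eq_zero.1 hc]
    · have := hgt k h hk; have := hx'.2; intro hc; nlinarith [sub_eq_zero.1 hc]
  have hgc : ContinuousOn g (Set.uIcc x₀ x₁) := by
    rw [huIcc]
    apply continuousOn_finset_prod
    intro k hk
    intro x hx'
    have h0 : |x - t k| ≠ 0 := abs_ne_zero.2 (hne x hx' k (Finset.mem_range.1 hk))
    have hca : ContinuousAt (fun y : ℝ => |y - t k|) x :=
      ((_root_.continuous_abs).comp (continuous_id.sub continuous_const)).continuousAt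
    exact (hca.rpow_const (Or.inl h0)).continuousWithinAt
  have hgpos : ∀ x ∈ Set.Ioo x₀ x₁, 0 < g x := by
    intro x hx'
    apply Finset.prod_pos
    intro k hk
    exact Real.rpow_pos_of_pos
      (abs_pos.2 (hne x ⟨hx'.1.le, hx'.2.le⟩ k (Finset.mem_range.1 hk))) _
  have hkey : Set.EqOn (fun x : ℝ => ∏ k ∈ Finset.range n, ((x : ℂ) - (t k : ℂ)) ^ ((a k : ℂ) / 2))
      (fun x : ℝ => ((g x : ℝ) : ℂ) *
        Complex.exp (Real.pi * Complex.I / 2 * (∑ k ∈ Finset.Ico m n, (a k : ℂ))))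
      (Set.uIcc x₀ x₁) := by
    intro x hx'
    rw [huIcc] at hx'
    exact sc_pointwise n t a m hm x
      (fun k hk => lt_of_lt_of_le (hlt k hk) hx'.1)
      (fun k hk1 hk2 => lt_of_le_of_lt hx'.2 (hgt k hk1 hk2))
  refine ⟨∫ x in x₀..x₁, g x,
    intervalIntegral.intervalIntegral_pos_of_pos_on (hgc.intervalIntegrable) hgpos hx, ?_⟩
  rw [intervalIntegral.integral_congr hkey, intervalIntegral.integral_mul_const,
    intervalIntegral.integral_ofReal]

private lemma continuousOn_finset_prod' : True := trivial

/-- Consecutive edges of the Schwarz–Christoffel image meet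
orthogonally: if `x₀ < x₁` lie in the open interval `(t j, t (j+1))` and `y₀ < y₁` lie in
`(t (j+1), t (j+2))`, then the edge integrals `P = ∫_{x₀}^{x₁} f` and
`Q = ∫_{y₀}^{y₁} f` are nonzero and satisfy `Re (P * conj Q) = 0`, i.e. they are
nondegenerate mutually orthogonal segments.
(Vertices are indexed `0, …, n-1` here, corresponding to `t_1, …, t_n` in the paper.) -/
theorem schwarzChristoffel_consecutive_edges_orthogonal (n : ℕ) (hn : 1 ≤ n)
    (t : ℕ → ℝ) (hmono : ∀ i j : ℕ, i < j → j < n → t i < t j)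
    (a : ℕ → ℤ) (hodd : ∀ k < n, Odd (a k))
    (f : ℂ → ℂ)
    (hf : ∀ z : ℂ, f z = ∏ k ∈ Finset.range n, (z - (t k : ℂ)) ^ ((a k : ℂ) / 2))
    (j : ℕ) (hj : j + 2 < n)
    (x₀ x₁ : ℝ) (hx01 : x₀ < x₁) (hx₀ : t j < x₀) (hx₁ : x₁ < t (j + 1))
    (y₀ y₁ : ℝ) (hy01 : y₀ < y₁) (hy₀ : t (j + 1) < y₀) (hy₁ : y₁ < t (j + 2))
    (P Q : ℂ)
    (hP : P = ∫ x in x₀..x₁, f (x : ℂ))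
    (hQ : Q = ∫ y in y₀..y₁, f (y : ℂ)) :
    P ≠ 0 ∧ Q ≠ 0 ∧ (P * (starRingEnd ℂ) Q).re = 0 := by
  have hfx : ∀ x : ℝ, f (x : ℂ) = ∏ k ∈ Finset.range n, ((x : ℂ) - (t k : ℂ)) ^ ((a k : ℂ) / 2) :=
    fun x => hf x
  -- edge P with m = j+1
  have hPlt : ∀ k, k < j + 1 → t k < x₀ := by
    intro k hk
    rcases lt_or_eq_of_le (Nat.lt_succ_iff.1 hk) with h | h
    · exact lt_trans (hmono k j h (by omega)) hx₀
    · subst h; exact hx₀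
  have hPgt : ∀ k, j + 1 ≤ k → k < n → x₁ < t k := by
    intro k hk1 hk2
    rcases lt_or_eq_of_le hk1 with h | h
    · exact lt_trans hx₁ (hmono (j+1) k h hk2)
    · subst h; exact hx₁
  have hQlt : ∀ k, k < j + 2 → t k < y₀ := by
    intro k hk
    rcases lt_or_eq_of_le (Nat.lt_succ_iff.1 hk) with h | h
    · exact lt_trans (hmono k (j+1) h (by omega)) hy₀
    · subst h; exact hy₀
  have hQgt : ∀ k, j + 2 ≤ k → k < n → y₁ < t k := by
    intro k hk1 hk2
    rcases lt_or_eq_of_le hk1 with h | h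
    · exact lt_trans hy₁ (hmono (j+2) k h hk2)
    · subst h; exact hy₁
  obtain ⟨r₁, hr₁, hPval⟩ := sc_edge n t a (j+1) (by omega) x₀ x₁ hx01 hPlt hPgt
  obtain ⟨r₂, hr₂, hQval⟩ := sc_edge n t a (j+2) (by omega) y₀ y₁ hy01 hQlt hQgt
  have hPeq : P = (r₁ : ℂ) *
      Complex.exp (Real.pi * Complex.I / 2 * (∑ k ∈ Finset.Ico (j+1) n, (a k : ℂ))) := by
    rw [hP]; simp_rw [hfx]; exact hPval
  have hQeq : Q = (r₂ : ℂ) *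
      Complex.exp (Real.pi * Complex.I / 2 * (∑ k ∈ Finset.Ico (j+2) n, (a k : ℂ))) := by
    rw [hQ]; simp_rw [hfx]; exact hQval
  refine ⟨?_, ?_, ?_⟩
  · rw [hPeq]
    exact mul_ne_zero (Complex.ofReal_ne_zero.2 hr₁.ne') (Complex.exp_ne_zero _)
  · rw [hQeq]
    exact mul_ne_zero (Complex.ofReal_ne_zero.2 hr₂.ne') (Complex.exp_ne_zero _)
  · -- sums as integers
    set s₁ : ℤ := ∑ k ∈ Finset.Ico (j+1) n, a k with hs₁
    set s₂ : ℤ := ∑ k ∈ Finset.Ico (j+2) n, a k with hs₂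
    have hc₁ : (∑ k ∈ Finset.Ico (j+1) n, (a k : ℂ)) = (s₁ : ℂ) := by push_cast [hs₁]; ring
    have hc₂ : (∑ k ∈ Finset.Ico (j+2) n, (a k : ℂ)) = (s₂ : ℂ) := by push_cast [hs₂]; ring
    have hsdiff : s₁ = a (j+1) + s₂ := by
      rw [hs₁, hs₂, Finset.sum_eq_sum_Ico_succ_bot (by omega : j + 1 < n)]
    obtain ⟨mm, hmm⟩ := hodd (j+1) (by omega)
    rw [hPeq, hQeq, hc₁, hc₂]
    rw [map_mul, Complex.conj_ofReal, ← Complex.exp_conj]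
    have hconj : (starRingEnd ℂ) (Real.pi * Complex.I / 2 * (s₂ : ℂ)) =
        -(Real.pi * Complex.I / 2 * (s₂ : ℂ)) := by
      simp only [map_mul, map_div₀, Complex.conj_I, Complex.conj_ofReal, map_intCast,
        map_ofNat]
      ring
    rw [hconj]
    have : ((r₁ : ℂ) * Complex.exp (Real.pi * Complex.I / 2 * (s₁:ℂ))) *
        ((r₂ : ℂ) * Complex.exp (-(Real.pi * Complex.I / 2 * (s₂:ℂ)))) =
        ((r₁ * r₂ : ℝ) : ℂ) *
          Complex.exp (Real.pi * Complex.I / 2 * (s₁:ℂ) + -(Real.pi * Complex.I / 2 * (s₂:ℂ))) := by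
      rw [Complex.exp_add]; push_cast; ring
    rw [this]
    have harg : Real.pi * Complex.I / 2 * (s₁:ℂ) + -(Real.pi * Complex.I / 2 * (s₂:ℂ)) =
        (mm : ℂ) * (Real.pi * Complex.I) + (Real.pi / 2 : ℝ) * Complex.I := by
      have : (s₁ : ℂ) - (s₂ : ℂ) = ((a (j+1) : ℤ) : ℂ) := by
        rw [hsdiff]; push_cast; ring
      have ha : ((a (j+1) : ℤ) : ℂ) = 2 * (mm : ℂ) + 1 := by
        rw [hmm]; push_cast; ring
      push_cast
      rw [hmm] at hsdiff
      have hs : (s₁ : ℂ) = 2 * (mm:ℂ) + 1 + (s₂:ℂ) := by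
        rw [hsdiff]; push_cast; ring
      rw [hs]; push_cast; ring
    rw [harg, Complex.exp_add, Complex.exp_int_mul, Complex.exp_pi_mul_I]
    have hI : Complex.exp (((Real.pi / 2 : ℝ) : ℂ) * Complex.I) = Complex.I := by
      rw [Complex.exp_mul_I, ← Complex.ofReal_cos, ← Complex.ofReal_sin,
        Real.cos_pi_div_two, Real.sin_pi_div_two]
      simp
    rw [hI]
    have hneg : ((-1 : ℂ) ^ mm) = (((-1 : ℝ) ^ mm : ℝ) : ℂ) := by push_cast; ring
    rw [hneg]
    have : ((r₁ * r₂ : ℝ) : ℂ) * ((((-1:ℝ) ^ mm : ℝ) : ℂ) * Complex.I) =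
        ((r₁ * r₂ * (-1:ℝ) ^ mm : ℝ) : ℂ) * Complex.I := by push_cast; ring
    rw [this, Complex.mul_I_re, Complex.ofReal_im, neg_zero]
end

section
/- Suppose the index j satisfies a_j ≥ −1 (so t_j is a finite vertex in the paper's terminology). Then for every δ > 0 smaller than the distance from t_j to every other vertex t_k (k ≠ j), the function t ↦ f(t) of the real variable t is interval integrable on [t_j − δ, t_j + δ] with respect to Lebesgue measure. -/
/-- At a finite vertex `t j` (one with `a j ≥ −1`), the
Schwarz–Christoffel integrand `f z = ∏_{k<n} (z − t k) ^ (a k / 2)`, restricted to the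
real line, is interval integrable on `[t j − δ, t j + δ]` with respect to Lebesgue
measure, for every `δ > 0` smaller than the distance from `t j` to every other vertex. -/
theorem schwarzChristoffel_integrable_at_finite_vertex (n : ℕ) (hn : 1 ≤ n)
    (t : ℕ → ℝ) (hmono : ∀ i j : ℕ, i < j → j < n → t i < t j)
    (a : ℕ → ℤ) (hodd : ∀ k < n, Odd (a k))
    (f : ℂ → ℂ)
    (hf : ∀ z : ℂ, f z = ∏ k ∈ Finset.range n, (z - (t k : ℂ)) ^ ((a k : ℂ) / 2))
    (j : ℕ) (hjn : j < n) (hja : -1 ≤ a j) :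
    ∀ δ : ℝ, 0 < δ → (∀ k < n, k ≠ j → δ < |t j - t k|) →
      IntervalIntegrable (fun x : ℝ => f (x : ℂ)) MeasureTheory.volume
        (t j - δ) (t j + δ) := by
  intro δ hδ hδk
  have hjm : j ∈ Finset.range n := Finset.mem_range.mpr hjn
  have hfx : (fun x : ℝ => f (x : ℂ)) =
      fun x : ℝ => ((x : ℂ) - t j) ^ ((a j : ℂ) / 2) *
        ∏ k ∈ (Finset.range n).erase j, ((x : ℂ) - t k) ^ ((a k : ℂ) / 2) := by
    funext x
    rw [hf, ← Finset.mul_prod_erase _ _ hjm]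
  rw [hfx]
  apply IntervalIntegrable.mul_continuousOn
  · -- the singular factor is integrable since `a j / 2 > -1`
    have hre : (-1 : ℝ) < ((a j : ℂ) / 2).re := by
      have h1 : (-1 : ℝ) ≤ (a j : ℝ) := by exact_mod_cast hja
      simp only [Complex.div_re, Complex.intCast_re, Complex.intCast_im]
      norm_num
      linarith
    have h2 := (intervalIntegral.intervalIntegrable_cpow' (a := -δ) (b := δ) hre).comp_sub_right (t j)
    have he : (fun x : ℝ => ((x : ℂ) - t j) ^ ((a j : ℂ) / 2)) =
        fun x : ℝ => ((x - t j : ℝ) : ℂ) ^ ((a j : ℂ) / 2) := by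
      funext x; push_cast; ring_nf
    rw [he, show t j - δ = -δ + t j by ring, show t j + δ = δ + t j by ring]
    exact h2
  · -- the remaining factors are continuous on the interval
    apply continuousOn_finset_prod
    intro k hk
    obtain ⟨hkn, hkj⟩ : k < n ∧ k ≠ j := by
      have h1 := Finset.mem_of_mem_erase hk
      exact ⟨Finset.mem_range.mp h1, Finset.ne_of_mem_erase hk⟩
    intro x hx
    have hxI : x ∈ Set.Icc (t j - δ) (t j + δ) := by
      rwa [Set.uIcc_of_le (by linarith)] at hx
    have hne : x ≠ t k := by
      intro h
      have h1 : |x - t j| ≤ δ := by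
        rw [abs_le]; constructor <;> [linarith [hxI.1]; linarith [hxI.2]]
      have h2 := hδk k hkn hkj
      rw [h, abs_sub_comm] at h1
      linarith
    have hne' : x - t k ≠ 0 := sub_ne_zero.mpr hne
    have hc : ContinuousAt (fun x : ℝ => ((x - t k : ℝ) : ℂ) ^ ((a k : ℂ) / 2)) x := by
      exact ContinuousAt.comp (x := x)
        (Complex.continuousAt_ofReal_cpow_const (x - t k) _ (Or.inr hne'))
        ((continuousAt_id.sub continuousAt_const : ContinuousAt (fun y : ℝ => y - t k) x))
    have he : (fun x : ℝ => ((x : ℂ) - t k) ^ ((a k : ℂ) / 2)) =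
        fun x : ℝ => ((x - t k : ℝ) : ℂ) ^ ((a k : ℂ) / 2) := by
      funext x; push_cast; ring_nf
    rw [he]
    exact hc.continuousWithinAt
end

section
/- Suppose the index j satisfies a_j ≤ −3 (so t_j is an infinite vertex in the paper's terminology). Then for every δ > 0, the function t ↦ f(t) of the real variable t is not interval integrable on [t_j, t_j + δ] with respect to Lebesgue measure. -/
open MeasureTheory Set Finset


/-- At an infinite vertex `t j` (one with `a j ≤ −3`), the
Schwarz–Christoffel integrand `f z = ∏_{k<n} (z − t k) ^ (a k / 2)`, restricted to the
real line, is not interval integrable on `[t j, t j + δ]` for any `δ > 0`: such a vertex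
lies at infinite distance in the orthodisk metric. -/
theorem schwarzChristoffel_not_integrable_at_infinite_vertex (n : ℕ) (hn : 1 ≤ n)
    (t : ℕ → ℝ) (hmono : ∀ i j : ℕ, i < j → j < n → t i < t j)
    (a : ℕ → ℤ) (hodd : ∀ k < n, Odd (a k))
    (f : ℂ → ℂ)
    (hf : ∀ z : ℂ, f z = ∏ k ∈ Finset.range n, (z - (t k : ℂ)) ^ ((a k : ℂ) / 2))
    (j : ℕ) (hjn : j < n) (hja : a j ≤ -3) :
    ∀ δ : ℝ, 0 < δ →
      ¬ IntervalIntegrable (fun x : ℝ => f (x : ℂ)) MeasureTheory.volume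
          (t j) (t j + δ) := by
  intro δ hδ hInt
  -- absolute value formula
  have habs : ∀ x : ℝ, ‖(f x)‖ =
      ∏ k ∈ Finset.range n, |x - t k| ^ ((a k : ℝ) / 2) := by
    intro x
    rw [hf, Complex.norm_prod]
    refine Finset.prod_congr rfl fun k _ => ?_
    have h1 : ((x : ℂ) - (t k : ℂ)) = (((x - t k : ℝ)) : ℂ) := by push_cast; ring
    have h2 : ((a k : ℂ) / 2) = (((a k : ℝ) / 2 : ℝ) : ℂ) := by push_cast; ring
    rw [h1, h2, Complex.norm_cpow_real, Complex.norm_real, Real.norm_eq_abs]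
  -- choose ε
  obtain ⟨ε, hε0, hεδ, hε1, hεsep⟩ : ∃ ε : ℝ, 0 < ε ∧ ε ≤ δ ∧ ε ≤ 1 ∧
      ∀ k < n, k ≠ j → t k ∉ Set.Icc (t j) (t j + ε) := by
    by_cases hj1 : j + 1 < n
    · refine ⟨min δ (min 1 ((t (j+1) - t j)/2)), ?_, min_le_left _ _,
        (min_le_right _ _).trans (min_le_left _ _), ?_⟩
      · have := hmono j (j+1) (by omega) hj1
        exact lt_min hδ (lt_min one_pos (by linarith))
      · intro k hk hkj hmem
        rcases lt_or_gt_of_ne hkj with h | h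
        · exact absurd hmem.1 (not_le.mpr (hmono k j h hjn))
        · have h1 : t (j+1) ≤ t k := by
            rcases eq_or_lt_of_le (Nat.succ_le_of_lt h) with h' | h'
            · exact (congrArg t h').le
            · exact (hmono (j+1) k h' hk).le
          have h2 := hmono j (j+1) (by omega) hj1
          have := hmem.2
          have : t k ≤ t j + (t (j+1) - t j)/2 := by
            refine this.trans (by gcongr; exact (min_le_right _ _).trans (min_le_right _ _))
          linarith
    · refine ⟨min δ 1, lt_min hδ one_pos, min_le_left _ _, min_le_right _ _, ?_⟩
      intro k hk hkj hmem
      have hkj' : k < j := by omega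
      exact absurd hmem.1 (not_le.mpr (hmono k j hkj' hjn))
  -- the product of the other factors
  set g : ℝ → ℝ := fun x => ∏ k ∈ (Finset.range n).erase j, |x - t k| ^ ((a k : ℝ) / 2)
    with hg
  have hne : ∀ x ∈ Set.Icc (t j) (t j + ε), ∀ k ∈ (Finset.range n).erase j, x - t k ≠ 0 := by
    intro x hx k hk
    rw [Finset.mem_erase, Finset.mem_range] at hk
    intro h0
    exact hεsep k hk.2 hk.1 (by rw [sub_eq_zero] at h0; rw [← h0]; exact hx)
  have hgcont : ContinuousOn g (Set.Icc (t j) (t j + ε)) := by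
    apply continuousOn_finset_prod
    intro k hk
    intro x hx
    apply ContinuousAt.continuousWithinAt
    have : (fun x : ℝ => |x - t k| ^ ((a k : ℝ) / 2)) =
        (fun y : ℝ => y ^ ((a k : ℝ) / 2)) ∘ (fun x => |x - t k|) := rfl
    rw [this]
    apply ContinuousAt.comp
    · exact Real.continuousAt_rpow_const _ _ (Or.inl (abs_ne_zero.mpr (hne x hx k hk)))
    · exact (continuous_abs.comp (continuous_id.sub continuous_const)).continuousAt
  have hgpos : ∀ x ∈ Set.Icc (t j) (t j + ε), 0 < g x := by
    intro x hx
    apply Finset.prod_pos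
    intro k hk
    exact Real.rpow_pos_of_pos (abs_pos.mpr (hne x hx k hk)) _
  -- min of g
  obtain ⟨x₀, hx₀, hmin⟩ := isCompact_Icc.exists_isMinOn
    (Set.nonempty_Icc.mpr (by linarith)) hgcont
  set C := g x₀ with hC
  have hCpos : 0 < C := hgpos x₀ hx₀
  -- lower bound for |f| near t j
  have hlow : ∀ x ∈ Set.Ioo (0:ℝ) ε, C * x ^ (-(3:ℝ)/2) ≤ ‖(f (↑(x + t j)))‖ := by
    intro x hx
    have hxmem : x + t j ∈ Set.Icc (t j) (t j + ε) := by
      constructor <;> [linarith [hx.1]; linarith [hx.2]]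
    rw [habs, ← Finset.mul_prod_erase _ _ (Finset.mem_range.mpr hjn)]
    have h1 : |x + t j - t j| ^ ((a j : ℝ) / 2) = x ^ ((a j : ℝ) / 2) := by
      rw [show x + t j - t j = x by ring, abs_of_pos hx.1]
    rw [h1]
    have h2 : x ^ (-(3:ℝ)/2) ≤ x ^ ((a j : ℝ) / 2) := by
      apply Real.rpow_le_rpow_of_exponent_ge hx.1 (by linarith [hx.2])
      have : (a j : ℝ) ≤ -3 := by exact_mod_cast hja
      linarith
    have h3 : C ≤ g (x + t j) := hmin hxmem
    calc C * x ^ (-(3:ℝ)/2) ≤ g (x + t j) * x ^ ((a j : ℝ)/2) := by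
          apply mul_le_mul h3 h2 (Real.rpow_pos_of_pos hx.1 _).le
          exact (hgpos _ hxmem).le
      _ = x ^ ((a j : ℝ)/2) * g (x + t j) := mul_comm _ _
  -- restrict integrability and shift
  have hInt2 : IntervalIntegrable (fun x : ℝ => f (x : ℂ)) volume (t j) (t j + ε) :=
    hInt.mono_set (by
      rw [Set.uIcc_of_le (by linarith), Set.uIcc_of_le (by linarith)]
      exact Set.Icc_subset_Icc le_rfl (by linarith))
  have hInt3 : IntervalIntegrable (fun x : ℝ => f (↑(x + t j))) volume 0 ε := by
    have := hInt2.comp_add_right (t j)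
    simpa using this
  have hIntOn : IntegrableOn (fun x : ℝ => f (↑(x + t j))) (Set.Ioo 0 ε) volume := by
    rw [intervalIntegrable_iff_integrableOn_Ioo_of_le hε0.le] at hInt3
    exact hInt3
  -- comparison
  have hmeas : AEStronglyMeasurable (fun x : ℝ => x ^ (-(3:ℝ)/2))
      (volume.restrict (Set.Ioo (0:ℝ) ε)) := by
    apply ContinuousOn.aestronglyMeasurable _ measurableSet_Ioo
    intro x hx
    exact (Real.continuousAt_rpow_const x _ (Or.inl (ne_of_gt hx.1))).continuousWithinAt
  have hIntRpow : IntegrableOn (fun x : ℝ => x ^ (-(3:ℝ)/2)) (Set.Ioo 0 ε) volume := by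
    have hdom : Integrable (fun x : ℝ => C⁻¹ • f (↑(x + t j)))
        (volume.restrict (Set.Ioo (0:ℝ) ε)) := hIntOn.smul C⁻¹
    refine hdom.mono hmeas ?_
    rw [ae_restrict_iff' measurableSet_Ioo]
    filter_upwards with x hx
    have h1 := hlow x hx
    have hpos : (0:ℝ) < x ^ (-(3:ℝ)/2) := Real.rpow_pos_of_pos hx.1 _
    rw [Real.norm_eq_abs, abs_of_pos hpos, norm_smul, norm_inv, Real.norm_eq_abs,
      abs_of_pos hCpos]
    rw [le_inv_mul_iff₀ hCpos]
    calc C * x ^ (-(3:ℝ)/2) ≤ ‖(f (↑(x + t j)))‖ := h1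
      _ = ‖f (↑(x + t j))‖ := rfl
  rw [intervalIntegral.integrableOn_Ioo_rpow_iff hε0] at hIntRpow
  linarith
end

section
/- Let f : ℝ × ℂ → ℂ be twice continuously differentiable in the real sense (C² as a map of real variables), with f(0, z) = z for all z ∈ ℂ. For ε ∈ ℝ and z ∈ ℂ let D f_ε(z) denote the real Fréchet derivative of f(ε, ·) at z, and define the Wirtinger derivatives ∂f(ε, z) = ½(D f_ε(z)(1) − i · D f_ε(z)(i)) and ∂̄f(ε, z) = ½(D f_ε(z)(1) + i · D f_ε(z)(i)), and the Beltrami coefficient ν(ε, z) = ∂̄f(ε, z) / ∂f(ε, z). Let f̊(z) denote the derivative at ε = 0 of ε ↦ f(ε, z). Then for each z ∈ ℂ the function ε ↦ ν(ε, z) is differentiable at ε = 0, with derivative equal to ∂̄f̊(z) = ½(D f̊(z)(1) + i · D f̊(z)(i)). -/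
/-- infinitesimal Beltrami differential, §2.2 of the paper. Let
`f : ℝ × ℂ → ℂ` be `C²` in the real sense with `f 0 = id`. With
`∂f(ε,z) = ½(Df_ε(z)(1) − i·Df_ε(z)(i))`, `∂̄f(ε,z) = ½(Df_ε(z)(1) + i·Df_ε(z)(i))`
(Wirtinger derivatives of `f(ε, ·)`), Beltrami coefficient `ν(ε,z) = ∂̄f/∂f`, and
`f̊(z) = d/dε|₀ f(ε,z)`, the function `ε ↦ ν(ε,z)` is differentiable at `ε = 0` with
derivative `∂̄f̊(z) = ½(Df̊(z)(1) + i·Df̊(z)(i))`. -/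
theorem infinitesimal_beltrami_eq_dbar_of_variation (f : ℝ × ℂ → ℂ)
    (hf : ContDiff ℝ 2 f)
    (hf0 : ∀ z : ℂ, f (0, z) = z)
    (ν : ℝ → ℂ → ℂ)
    (hν : ∀ (ε : ℝ) (z : ℂ), ν ε z =
      ((fderiv ℝ (fun w : ℂ => f (ε, w)) z 1
          + Complex.I * fderiv ℝ (fun w : ℂ => f (ε, w)) z Complex.I) / 2) /
      ((fderiv ℝ (fun w : ℂ => f (ε, w)) z 1
          - Complex.I * fderiv ℝ (fun w : ℂ => f (ε, w)) z Complex.I) / 2))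
    (fdot : ℂ → ℂ)
    (hfdot : ∀ z : ℂ, fdot z = deriv (fun ε : ℝ => f (ε, z)) 0) :
    ∀ z : ℂ, HasDerivAt (fun ε : ℝ => ν ε z)
      ((fderiv ℝ fdot z 1 + Complex.I * fderiv ℝ fdot z Complex.I) / 2) 0 := by
  intro z
  have hfd : Differentiable ℝ f := hf.differentiable (by norm_num)
  have hf'c : ContDiff ℝ 1 (fderiv ℝ f) := hf.fderiv_right (m := 1) (by norm_num)
  have hf'd : Differentiable ℝ (fderiv ℝ f) := hf'c.differentiable one_ne_zero
  set f' := fderiv ℝ f with hf'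
  set f'' := fderiv ℝ f' (0, z) with hf''def
  -- partial derivative in z
  have hpart : ∀ (ε : ℝ) (v : ℂ), fderiv ℝ (fun w : ℂ => f (ε, w)) z v
      = f' (ε, z) (0, v) := by
    intro ε v
    have h1 : HasFDerivAt (fun w : ℂ => f (ε, w))
        ((f' (ε, z)).comp (ContinuousLinearMap.inr ℝ ℝ ℂ)) z :=
      (hfd (ε, z)).hasFDerivAt.comp z (hasFDerivAt_prodMk_right ε z)
    simp [h1.fderiv]
  -- fdot formula
  have hfdot' : ∀ w : ℂ, fdot w = f' (0, w) (1, 0) := by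
    intro w
    have h1 : HasDerivAt (fun ε : ℝ => f (ε, w)) (f' (0, w) (1, 0)) 0 :=
      (hfd (0, w)).hasFDerivAt.comp_hasDerivAt 0
        ((hasDerivAt_id 0).prodMk (hasDerivAt_const 0 w))
    rw [hfdot w, h1.deriv]
  -- fderiv of fdot
  have hfdotD : ∀ v : ℂ, fderiv ℝ fdot z v = fderiv ℝ f' (0, z) (0, v) (1, 0) := by
    intro v
    have h1 : HasFDerivAt (fun w : ℂ => f' (0, w))
        ((fderiv ℝ f' (0, z)).comp (ContinuousLinearMap.inr ℝ ℝ ℂ)) z :=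
      (hf'd (0, z)).hasFDerivAt.comp z (hasFDerivAt_prodMk_right 0 z)
    have h2 : HasFDerivAt fdot
        ((ContinuousLinearMap.apply ℝ ℂ ((1 : ℝ), (0 : ℂ))).comp
          ((fderiv ℝ f' (0, z)).comp (ContinuousLinearMap.inr ℝ ℝ ℂ))) z := by
      have h3 := (ContinuousLinearMap.apply ℝ ℂ ((1 : ℝ), (0 : ℂ))).hasFDerivAt.comp z h1
      refine h3.congr_of_eventuallyEq (Filter.Eventually.of_forall fun w => ?_)
      simp [hfdot' w, Function.comp]
    simp [h2.fderiv]
  -- derivative in ε of the Wirtinger pieces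
  have hgd : ∀ v : ℂ, HasDerivAt (fun ε : ℝ => fderiv ℝ (fun w : ℂ => f (ε, w)) z v)
      (f'' (1, 0) (0, v)) 0 := by
    intro v
    have h1 : HasDerivAt (fun ε : ℝ => f' (ε, z)) (f'' (1, 0)) 0 :=
      (hf'd (0, z)).hasFDerivAt.comp_hasDerivAt 0
        ((hasDerivAt_id 0).prodMk (hasDerivAt_const 0 z))
    have h2 : HasDerivAt (fun ε : ℝ => f' (ε, z) (0, v)) (f'' (1, 0) (0, v)) 0 :=
      (ContinuousLinearMap.apply ℝ ℂ ((0 : ℝ), v)).hasFDerivAt.comp_hasDerivAt 0 h1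
    exact h2.congr_of_eventuallyEq (Filter.Eventually.of_forall fun ε => hpart ε v)
  -- values at ε = 0
  have hid : (fun w : ℂ => f (0, w)) = id := funext hf0
  have h0 : ∀ v : ℂ, fderiv ℝ (fun w : ℂ => f (0, w)) z v = v := by
    intro v; rw [hid, fderiv_id]; rfl
  -- symmetry of second derivative
  have hsymm : ∀ a b : ℝ × ℂ, f'' a b = f'' b a :=
    second_derivative_symmetric (fun y => (hfd y).hasFDerivAt) (hf'd (0, z)).hasFDerivAt
  -- assemble
  have hB : HasDerivAt (fun ε : ℝ =>
      (fderiv ℝ (fun w : ℂ => f (ε, w)) z 1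
        + Complex.I * fderiv ℝ (fun w : ℂ => f (ε, w)) z Complex.I) / 2)
      ((f'' (1, 0) (0, 1) + Complex.I * f'' (1, 0) (0, Complex.I)) / 2) 0 :=
    (((hgd 1).add ((hgd Complex.I).const_mul Complex.I)).div_const 2)
  have hA : HasDerivAt (fun ε : ℝ =>
      (fderiv ℝ (fun w : ℂ => f (ε, w)) z 1
        - Complex.I * fderiv ℝ (fun w : ℂ => f (ε, w)) z Complex.I) / 2)
      ((f'' (1, 0) (0, 1) - Complex.I * f'' (1, 0) (0, Complex.I)) / 2) 0 :=
    (((hgd 1).sub ((hgd Complex.I).const_mul Complex.I)).div_const 2)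
  have hA0 : (fderiv ℝ (fun w : ℂ => f (0, w)) z 1
      - Complex.I * fderiv ℝ (fun w : ℂ => f (0, w)) z Complex.I) / 2 = 1 := by
    rw [h0, h0, Complex.I_mul_I]; ring
  have hB0 : (fderiv ℝ (fun w : ℂ => f (0, w)) z 1
      + Complex.I * fderiv ℝ (fun w : ℂ => f (0, w)) z Complex.I) / 2 = 0 := by
    rw [h0, h0, Complex.I_mul_I]; ring
  have hdiv := hB.div hA (by rw [hA0]; exact one_ne_zero)
  rw [hA0, hB0] at hdiv
  have hres : HasDerivAt (fun ε : ℝ => ν ε z)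
      ((f'' (1, 0) (0, 1) + Complex.I * f'' (1, 0) (0, Complex.I)) / 2) 0 := by
    have := hdiv.congr_of_eventuallyEq (Filter.Eventually.of_forall fun ε => hν ε z)
    simpa using this
  have : (fderiv ℝ fdot z 1 + Complex.I * fderiv ℝ fdot z Complex.I) / 2
      = (f'' (1, 0) (0, 1) + Complex.I * f'' (1, 0) (0, Complex.I)) / 2 := by
    rw [hfdotD, hfdotD, hsymm (0, 1) (1, 0), hsymm (0, Complex.I) (1, 0)]
  rw [this]
  exact hres
end
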